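/- Let τ, σ ∈ ℂ with Im τ > 0 and Im σ > 0, and let z ∈ ℂ with z ∉ {jτ + kσ + l : j, k, l ∈ ℤ}. Then the elliptic gamma function satisfies the two difference equations Γ(z+τ,τ,σ) = θ₀(z,σ)·Γ(z,τ,σ) and Γ(z+σ,τ,σ) = θ₀(z,τ)·Γ(z,τ,σ). -/

import Mathlib

namespace EGG

/-- Integer vectors in `ℤ³`. -/
abbrev V : Type := Fin 3 → ℤ

/-- gcd of the three coordinates. -/
def gcd3 (v : V) : ℕ := Nat.gcd (Nat.gcd (v 0).natAbs (v 1).natAbs) (v 2).natAbs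

/-- A vector of `ℤ³` is primitive if it is nonzero and the gcd of its coordinates is 1. -/
def Primitive (a : V) : Prop := a ≠ 0 ∧ gcd3 a = 1

/-- Cross product of integer vectors. -/
def cross (a b : V) : V :=
  ![a 1 * b 2 - a 2 * b 1, a 2 * b 0 - a 0 * b 2, a 0 * b 1 - a 1 * b 0]

/-- Dot product of integer vectors. -/
def dotZ (α a : V) : ℤ := α 0 * a 0 + α 1 * a 1 + α 2 * a 2

/-- Dot product of a rational vector with an integer vector. -/
def dotQ (α : Fin 3 → ℚ) (a : V) : ℚ := α 0 * (a 0 : ℚ) + α 1 * (a 1 : ℚ) + α 2 * (a 2 : ℚ)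

/-- Dot product of a real vector with an integer vector. -/
def dotR (l : Fin 3 → ℝ) (a : V) : ℝ := l 0 * (a 0 : ℝ) + l 1 * (a 1 : ℝ) + l 2 * (a 2 : ℝ)

/-- The pairing `α(x) = α₁x₁+α₂x₂+α₃x₃` of a rational vector with a complex vector. -/
noncomputable def pairQ (α : Fin 3 → ℚ) (x : Fin 3 → ℂ) : ℂ :=
  (α 0 : ℂ) * x 0 + (α 1 : ℂ) * x 1 + (α 2 : ℂ) * x 2

/-- The pairing `α(x) = α₁x₁+α₂x₂+α₃x₃` of an integer vector with a complex vector. -/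
noncomputable def pairZ (α : V) (x : Fin 3 → ℂ) : ℂ :=
  (α 0 : ℂ) * x 0 + (α 1 : ℂ) * x 1 + (α 2 : ℂ) * x 2

/-- The canonical map `ℤ³ → ℚ³`. -/
def toQ (a : V) : Fin 3 → ℚ := fun i => (a i : ℚ)

/-- Determinant of the 3×3 matrix with rows `α, β, δ`. -/
def det3Q (α β δ : Fin 3 → ℚ) : ℚ := Matrix.det (Matrix.of ![α, β, δ])

/-- `(α, β)` is an oriented basis of the plane `H(a) = {α : α·a = 0}`. -/
def IsOrientedBasis (a : V) (α β : Fin 3 → ℚ) : Prop :=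
  dotQ α a = 0 ∧ dotQ β a = 0 ∧
  LinearIndependent ℚ ![α, β] ∧
  (∀ δ : Fin 3 → ℚ, dotQ δ a = 0 → ∃ p q : ℚ, δ = p • α + q • β) ∧
  (∀ δ : Fin 3 → ℚ, 0 < dotQ δ a → 0 < det3Q α β δ)

/-- The domain `U⁺_a ⊆ ℂ³`. -/
noncomputable def UPlus (a : V) : Set (Fin 3 → ℂ) :=
  {x | ∃ α β : Fin 3 → ℚ, IsOrientedBasis a α β ∧
    0 < (pairQ α x * (starRingEnd ℂ) (pairQ β x)).im}

/-- `γ` is the direction vector of the wedge `(a,b)`: `γ` is primitive and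
`a × b = s • γ` for some integer `s ≥ 1` (the modulus). -/
def IsDirVec (a b γ : V) : Prop :=
  Primitive γ ∧ ∃ s : ℤ, 1 ≤ s ∧ cross a b = s • γ

/-- `C₊₋(a,b) = {δ ∈ ℤ³ : δ·a > 0, δ·b ≤ 0}`. -/
def Cpm (a b : V) : Set V := {δ | 0 < dotZ δ a ∧ dotZ δ b ≤ 0}

/-- `C₋₊(a,b) = {δ ∈ ℤ³ : δ·a ≤ 0, δ·b > 0}`. -/
def Cmp (a b : V) : Set V := {δ | dotZ δ a ≤ 0 ∧ 0 < dotZ δ b}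

/-- The factor `1 - e^{-2πi(δ(x)-w)/γ(x)}` appearing in the numerator of `Γ_{a,b}`. -/
noncomputable def gammaFacP (γ : V) (x : Fin 3 → ℂ) (w : ℂ) (δ : V) : ℂ :=
  1 - Complex.exp (-(2 * (Real.pi : ℂ) * Complex.I) * (pairZ δ x - w) / pairZ γ x)

/-- The factor `1 - e^{2πi(δ(x)-w)/γ(x)}` appearing in the denominator of `Γ_{a,b}`. -/
noncomputable def gammaFacM (γ : V) (x : Fin 3 → ℂ) (w : ℂ) (δ : V) : ℂ :=
  1 - Complex.exp ((2 * (Real.pi : ℂ) * Complex.I) * (pairZ δ x - w) / pairZ γ x)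

/-- The gamma function `Γ_{a,b}(w,x)` of the wedge `(a,b)` with direction vector `γ`:
the products run over the sets `C₊₋(a,b)/ℤγ` and `C₋₊(a,b)/ℤγ`; each factor is evaluated
on the chosen representative `Quotient.out q` of the class `q` (the factors are constant
on classes modulo `ℤγ`). -/
noncomputable def GammaWedge (a b γ : V) (w : ℂ) (x : Fin 3 → ℂ) : ℂ :=
  if a = b then 1 else
    (∏' q : (QuotientAddGroup.mk '' Cpm a b : Set (V ⧸ AddSubgroup.zmultiples γ)),
      gammaFacP γ x w (Quotient.out (q : V ⧸ AddSubgroup.zmultiples γ))) /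
    (∏' q : (QuotientAddGroup.mk '' Cmp a b : Set (V ⧸ AddSubgroup.zmultiples γ)),
      gammaFacM γ x w (Quotient.out (q : V ⧸ AddSubgroup.zmultiples γ)))

/-- The theta function `θ₀(z,τ)`, for `Im τ > 0`. -/
noncomputable def theta0 (z τ : ℂ) : ℂ :=
  ∏' j : ℕ, ((1 - Complex.exp (2 * (Real.pi : ℂ) * Complex.I * (((j : ℂ) + 1) * τ - z))) *
    (1 - Complex.exp (2 * (Real.pi : ℂ) * Complex.I * ((j : ℂ) * τ + z))))

/-- The elliptic gamma function `Γ(z,τ,σ)`, for `Im τ > 0` and `Im σ > 0`. -/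
noncomputable def ellGamma (z τ σ : ℂ) : ℂ :=
  (∏' p : ℕ × ℕ, (1 - Complex.exp (2 * (Real.pi : ℂ) * Complex.I *
      (((p.1 : ℂ) + 1) * τ + ((p.2 : ℂ) + 1) * σ - z)))) /
  (∏' p : ℕ × ℕ, (1 - Complex.exp (2 * (Real.pi : ℂ) * Complex.I *
      ((p.1 : ℂ) * τ + (p.2 : ℂ) * σ + z))))

/-- The elliptic gamma function `Γ̃(z,τ,σ)` in the domain `Im τ < 0 < Im σ`. -/
noncomputable def ellGammaTilde (z τ σ : ℂ) : ℂ :=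
  (∏' p : ℕ × ℕ, (1 - Complex.exp (2 * (Real.pi : ℂ) * Complex.I *
      (z - ((p.1 : ℂ) + 1) * τ + (p.2 : ℂ) * σ)))) /
  (∏' p : ℕ × ℕ, (1 - Complex.exp (2 * (Real.pi : ℂ) * Complex.I *
      (-z - (p.1 : ℂ) * τ + ((p.2 : ℂ) + 1) * σ))))

/-- The polynomial `P₂`. -/
noncomputable def P2 (w x₁ x₂ : ℂ) : ℂ :=
  (w ^ 2 - (x₁ + x₂) * w + (x₁ ^ 2 + x₂ ^ 2 + 3 * x₁ * x₂) / 6) / (x₁ * x₂)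

/-- The Bernoulli polynomial `P₃ = B₃,₃`. -/
noncomputable def P3 (w x₁ x₂ x₃ : ℂ) : ℂ :=
  w ^ 3 / (x₁ * x₂ * x₃) - (3 * (x₁ + x₂ + x₃) / (2 * (x₁ * x₂ * x₃))) * w ^ 2
    + ((x₁ ^ 2 + x₂ ^ 2 + x₃ ^ 2 + 3 * x₁ * x₂ + 3 * x₂ * x₃ + 3 * x₁ * x₃)
        / (2 * (x₁ * x₂ * x₃))) * w
    - (1 / 4) * (x₁ + x₂ + x₃) * (1 / x₁ + 1 / x₂ + 1 / x₃)

/-- The real polynomial `R₃ = B₂,₃`. -/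
noncomputable def R3 (ζ t s : ℝ) : ℝ :=
  ζ ^ 3 / (t * s) - (3 / 2) * (1 / t + 1 / s) * ζ ^ 2
    + (t / (2 * s) + s / (2 * t) + 3 / 2) * ζ - (t + s) / 4

/-- The hermitian weight `h₂(z,τ)` for the theta bundle. -/
noncomputable def h2 (z τ : ℂ) : ℝ :=
  Real.exp (-2 * Real.pi * z.im ^ 2 / τ.im + 2 * Real.pi * (z - τ / 6).im)

/-- The hermitian weight `h₃(z,τ,σ)`. -/
noncomputable def h3 (z τ σ : ℂ) : ℝ :=
  Real.exp (-(2 * Real.pi / 3) * R3 z.im τ.im σ.im)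

/-- The finite product of theta functions `Δ` with parameters `A₁ = α₁(x)`, `A₂ = α₂(x)`,
`A₃ = α₃(x)` and first framing coordinate `m = μ(a)`:
`∏_{j=0}^{m-1} θ₀((w+jA₁)/A₃, A₂/A₃)` for `m ≥ 0` and
`(∏_{j=m}^{-1} θ₀((w+jA₁)/A₃, A₂/A₃))⁻¹` for `m < 0`. -/
noncomputable def DeltaInt (w A₁ A₂ A₃ : ℂ) (m : ℤ) : ℂ :=
  if 0 ≤ m then
    ∏ j ∈ Finset.range m.toNat, theta0 ((w + (j : ℂ) * A₁) / A₃) (A₂ / A₃)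
  else
    (∏ j ∈ Finset.range (-m).toNat, theta0 ((w - ((j : ℂ) + 1) * A₁) / A₃) (A₂ / A₃))⁻¹


section AuxStatement19

open Complex Real Filter

noncomputable def SS (τ σ c : ℂ) : ℂ :=
  ∑' p : ℕ × ℕ, Complex.log (1 - Complex.exp
    (2 * (Real.pi : ℂ) * Complex.I * ((p.1 : ℂ) * τ + (p.2 : ℂ) * σ + c)))

noncomputable def TT (σ c : ℂ) : ℂ :=
  ∑' k : ℕ, Complex.log (1 - Complex.exp
    (2 * (Real.pi : ℂ) * Complex.I * ((k : ℂ) * σ + c)))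

lemma aux_norm_exp (u : ℂ) :
    ‖Complex.exp (2 * (Real.pi : ℂ) * Complex.I * u)‖ = Real.exp (-(2 * Real.pi * u.im)) := by
  rw [Complex.norm_exp]
  congr 1
  simp [Complex.mul_re, Complex.mul_im]

lemma aux_summable_log {ι : Type*} (w : ι → ℂ) (hw : Summable fun i => ‖w i‖) :
    Summable fun i => Complex.log (1 - w i) := by
  have h2 : ∀ᶠ i in Filter.cofinite, ‖w i‖ ≤ 1 / 2 :=
    (hw.tendsto_cofinite_zero.eventually_lt_const (by norm_num : (0:ℝ) < 1/2)).mono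
      fun i hi => hi.le
  refine Summable.of_norm_bounded_eventually (g := fun i => 3/2 * ‖w i‖) (hw.mul_left _) ?_
  filter_upwards [h2] with i hi
  have h3 : ‖(-w i : ℂ)‖ ≤ 1/2 := by rwa [norm_neg]
  have h4 := Complex.norm_log_one_add_half_le_self h3
  rwa [← sub_eq_add_neg, norm_neg] at h4

lemma aux_summable_norm2 {τ σ : ℂ} (hτ : 0 < τ.im) (hσ : 0 < σ.im) (c : ℂ) :
    Summable fun p : ℕ × ℕ =>
      ‖Complex.exp (2 * (Real.pi : ℂ) * Complex.I * ((p.1 : ℂ) * τ + (p.2 : ℂ) * σ + c))‖ := by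
  have h : ∀ p : ℕ × ℕ,
      ‖Complex.exp (2 * (Real.pi : ℂ) * Complex.I * ((p.1 : ℂ) * τ + (p.2 : ℂ) * σ + c))‖
      = Real.exp (-(2*Real.pi*c.im)) *
        (Real.exp (-(2*Real.pi*τ.im)) ^ p.1 * Real.exp (-(2*Real.pi*σ.im)) ^ p.2) := by
    intro p
    rw [aux_norm_exp, ← Real.exp_nat_mul, ← Real.exp_nat_mul, ← Real.exp_add, ← Real.exp_add]
    congr 1
    simp [Complex.add_im, Complex.mul_im]
    ring
  rw [funext h]
  apply Summable.mul_left
  exact (summable_geometric_of_lt_one (Real.exp_nonneg _)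
      (Real.exp_lt_one_iff.mpr (by nlinarith [Real.pi_pos]))).mul_of_nonneg
    (summable_geometric_of_lt_one (Real.exp_nonneg _)
      (Real.exp_lt_one_iff.mpr (by nlinarith [Real.pi_pos])))
    (fun _ => pow_nonneg (Real.exp_nonneg _) _) (fun _ => pow_nonneg (Real.exp_nonneg _) _)

lemma aux_summable_norm1 {σ : ℂ} (hσ : 0 < σ.im) (c : ℂ) :
    Summable fun k : ℕ =>
      ‖Complex.exp (2 * (Real.pi : ℂ) * Complex.I * ((k : ℂ) * σ + c))‖ := by
  have h : ∀ k : ℕ,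
      ‖Complex.exp (2 * (Real.pi : ℂ) * Complex.I * ((k : ℂ) * σ + c))‖
      = Real.exp (-(2*Real.pi*σ.im)) ^ k * Real.exp (-(2*Real.pi*c.im)) := by
    intro k
    rw [aux_norm_exp, ← Real.exp_nat_mul, ← Real.exp_add]
    congr 1
    simp [Complex.add_im, Complex.mul_im]
    ring
  rw [funext h]
  exact (summable_geometric_of_lt_one (Real.exp_nonneg _)
      (Real.exp_lt_one_iff.mpr (by nlinarith [Real.pi_pos]))).mul_right _

lemma aux_ne_zero {u : ℂ} (hu : ∀ n : ℤ, u ≠ (n : ℂ)) :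
    1 - Complex.exp (2 * (Real.pi : ℂ) * Complex.I * u) ≠ 0 := by
  intro h
  have h1 : Complex.exp (2 * (Real.pi : ℂ) * Complex.I * u) = 1 := by linear_combination -h
  rw [Complex.exp_eq_one_iff] at h1
  obtain ⟨n, hn⟩ := h1
  have h2 : (2 * (Real.pi : ℂ) * Complex.I) ≠ 0 := by
    simp [Real.pi_ne_zero, Complex.I_ne_zero, Complex.ofReal_ne_zero]
  exact hu n (mul_left_cancel₀ h2 (by linear_combination hn))

lemma aux_tprod_eq_cexp {ι : Type*} (f : ι → ℂ) (hfn : ∀ n, f n ≠ 0)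
    (hf : Summable fun n => Complex.log (f n)) :
    ∏' n, f n = Complex.exp (∑' n, Complex.log (f n)) :=
  (Complex.cexp_tsum_eq_tprod hfn hf).symm

lemma aux_split (F : ℕ × ℕ → ℂ) (hF : Summable F) :
    ∑' p : ℕ × ℕ, F p = (∑' k : ℕ, F (0, k)) + ∑' p : ℕ × ℕ, F (p.1 + 1, p.2) := by
  have hinj : Function.Injective (fun p : ℕ × ℕ => ((p.1 + 1, p.2) : ℕ × ℕ)) := by
    intro a b h
    simpa [Prod.ext_iff] using h
  have hF' : Summable fun p : ℕ × ℕ => F (p.1 + 1, p.2) := hF.comp_injective hinj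
  have hslice : ∀ j : ℕ, Summable fun k : ℕ => F (j, k) := fun j => hF.prod_factor j
  have hg : Summable fun j : ℕ => ∑' k : ℕ, F (j, k) :=
    ⟨∑' p, F p, hF.hasSum.prod_fiberwise fun j => (hslice j).hasSum⟩
  rw [Summable.tsum_prod' hF hslice, Summable.tsum_eq_zero_add hg, Summable.tsum_prod' hF' fun j => hF'.prod_factor j]

lemma SSdef (τ σ c : ℂ) : SS τ σ c = ∑' p : ℕ × ℕ, Complex.log (1 - Complex.exp
    (2 * (Real.pi : ℂ) * Complex.I * ((p.1 : ℂ) * τ + (p.2 : ℂ) * σ + c))) := rfl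

lemma TTdef (σ c : ℂ) : TT σ c = ∑' k : ℕ, Complex.log (1 - Complex.exp
    (2 * (Real.pi : ℂ) * Complex.I * ((k : ℂ) * σ + c))) := rfl

theorem aux_tprodS {τ σ : ℂ} (hτ : 0 < τ.im) (hσ : 0 < σ.im) (c : ℂ)
    (hc : ∀ p : ℕ × ℕ, ∀ n : ℤ, (p.1 : ℂ) * τ + (p.2 : ℂ) * σ + c ≠ (n : ℂ)) :
    ∏' p : ℕ × ℕ, (1 - Complex.exp
        (2 * (Real.pi : ℂ) * Complex.I * ((p.1 : ℂ) * τ + (p.2 : ℂ) * σ + c)))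
      = Complex.exp (SS τ σ c) := by
  rw [SSdef]
  exact aux_tprod_eq_cexp _ (fun p => aux_ne_zero (hc p))
    (aux_summable_log _ (aux_summable_norm2 hτ hσ c))

theorem aux_tprodT {σ : ℂ} (hσ : 0 < σ.im) (c : ℂ)
    (hc : ∀ (k : ℕ) (n : ℤ), (k : ℂ) * σ + c ≠ (n : ℂ)) :
    ∏' k : ℕ, (1 - Complex.exp (2 * (Real.pi : ℂ) * Complex.I * ((k : ℂ) * σ + c)))
      = Complex.exp (TT σ c) := by
  rw [TTdef]
  exact aux_tprod_eq_cexp _ (fun k => aux_ne_zero (hc k))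
    (aux_summable_log _ (aux_summable_norm1 hσ c))

theorem aux_multT {σ : ℂ} (hσ : 0 < σ.im) (c : ℂ)
    (hc : ∀ (k : ℕ) (n : ℤ), (k : ℂ) * σ + c ≠ (n : ℂ)) :
    Multipliable fun k : ℕ =>
      (1 - Complex.exp (2 * (Real.pi : ℂ) * Complex.I * ((k : ℂ) * σ + c))) :=
  Complex.multipliable_of_summable_log (aux_summable_log _ (aux_summable_norm1 hσ c))

theorem aux_SS_split {τ σ : ℂ} (hτ : 0 < τ.im) (hσ : 0 < σ.im) (c : ℂ) :
    SS τ σ c = TT σ c + SS τ σ (c + τ) := by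
  rw [SSdef, aux_split _ (aux_summable_log _ (aux_summable_norm2 hτ hσ c)), TTdef, SSdef]
  congr 1
  · exact tsum_congr fun k => by
      rw [show ((0 : ℕ) : ℂ) * τ + ((k : ℕ) : ℂ) * σ + c = (k : ℂ) * σ + c by push_cast; ring]
  · exact tsum_congr fun p => by
      rw [show (((p.1 + 1 : ℕ)) : ℂ) * τ + ((p.2 : ℕ) : ℂ) * σ + c
        = (p.1 : ℂ) * τ + (p.2 : ℂ) * σ + (c + τ) by push_cast; ring]

theorem aux_ellGamma_eq (z τ σ : ℂ) (hτ : 0 < τ.im) (hσ : 0 < σ.im)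
    (hz : ∀ j k l : ℤ, z ≠ (j : ℂ) * τ + (k : ℂ) * σ + (l : ℂ)) :
    ellGamma z τ σ = Complex.exp (SS τ σ (τ + σ - z) - SS τ σ z) := by
  have hminus : ∀ (a b : ℕ) (n : ℤ),
      ((a : ℂ) + 1) * τ + ((b : ℂ) + 1) * σ - z ≠ (n : ℂ) := by
    intro a b n h
    exact hz (a + 1) (b + 1) (-n) (by push_cast; linear_combination -h)
  have hplus : ∀ (a b : ℕ) (n : ℤ), (a : ℂ) * τ + (b : ℂ) * σ + z ≠ (n : ℂ) := by
    intro a b n h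
    exact hz (-(a : ℤ)) (-(b : ℤ)) n (by push_cast; linear_combination h)
  have hnum : (∏' p : ℕ × ℕ, (1 - Complex.exp (2 * (Real.pi : ℂ) * Complex.I *
      (((p.1 : ℂ) + 1) * τ + ((p.2 : ℂ) + 1) * σ - z)))) = Complex.exp (SS τ σ (τ + σ - z)) := by
    rw [show (fun p : ℕ × ℕ => (1 - Complex.exp (2 * (Real.pi : ℂ) * Complex.I *
        (((p.1 : ℂ) + 1) * τ + ((p.2 : ℂ) + 1) * σ - z))))
      = fun p : ℕ × ℕ => (1 - Complex.exp (2 * (Real.pi : ℂ) * Complex.I *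
        ((p.1 : ℂ) * τ + (p.2 : ℂ) * σ + (τ + σ - z)))) from
      funext fun p => by rw [show ((p.1 : ℂ) + 1) * τ + ((p.2 : ℂ) + 1) * σ - z
        = (p.1 : ℂ) * τ + (p.2 : ℂ) * σ + (τ + σ - z) by ring]]
    refine aux_tprodS hτ hσ _ fun p n h => hminus p.1 p.2 n ?_
    rw [show ((p.1 : ℂ) + 1) * τ + ((p.2 : ℂ) + 1) * σ - z
      = (p.1 : ℂ) * τ + (p.2 : ℂ) * σ + (τ + σ - z) by ring]
    exact h
  have hden : (∏' p : ℕ × ℕ, (1 - Complex.exp (2 * (Real.pi : ℂ) * Complex.I *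
      ((p.1 : ℂ) * τ + (p.2 : ℂ) * σ + z)))) = Complex.exp (SS τ σ z) :=
    aux_tprodS hτ hσ _ fun p n h => hplus p.1 p.2 n h
  rw [ellGamma, hnum, hden, ← Complex.exp_sub]

theorem aux_key (z τ σ : ℂ) (hτ : 0 < τ.im) (hσ : 0 < σ.im)
    (hz : ∀ j k l : ℤ, z ≠ (j : ℂ) * τ + (k : ℂ) * σ + (l : ℂ)) :
    ellGamma (z + τ) τ σ = theta0 z σ * ellGamma z τ σ := by
  have hz' : ∀ j k l : ℤ, z + τ ≠ (j : ℂ) * τ + (k : ℂ) * σ + (l : ℂ) := by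
    intro j k l h
    exact hz (j - 1) k l (by push_cast; linear_combination h)
  -- lattice conditions for the 1D products
  have hc1 : ∀ (k : ℕ) (n : ℤ), (k : ℂ) * σ + (σ - z) ≠ (n : ℂ) := by
    intro k n h
    exact hz 0 (k + 1) (-n) (by push_cast; linear_combination -h)
  have hc2 : ∀ (k : ℕ) (n : ℤ), (k : ℂ) * σ + z ≠ (n : ℂ) := by
    intro k n h
    exact hz 0 (-(k : ℤ)) n (by push_cast; linear_combination h)
  -- theta0 as exponentials
  have hth : theta0 z σ = Complex.exp (TT σ (σ - z)) * Complex.exp (TT σ z) := by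
    rw [theta0]
    have hA : Multipliable fun j : ℕ =>
        (1 - Complex.exp (2 * (Real.pi : ℂ) * Complex.I * (((j : ℂ) + 1) * σ - z))) := by
      refine (aux_multT hσ (σ - z) hc1).congr fun j => ?_
      rw [show ((j : ℂ)) * σ + (σ - z) = ((j : ℂ) + 1) * σ - z by ring]
    have hB : Multipliable fun j : ℕ =>
        (1 - Complex.exp (2 * (Real.pi : ℂ) * Complex.I * ((j : ℂ) * σ + z))) :=
      aux_multT hσ z hc2
    rw [Multipliable.tprod_mul hA hB]
    congr 1
    · rw [show (fun j : ℕ => (1 - Complex.exp (2 * (Real.pi : ℂ) * Complex.I *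
          (((j : ℂ) + 1) * σ - z))))
        = fun j : ℕ => (1 - Complex.exp (2 * (Real.pi : ℂ) * Complex.I *
          ((j : ℂ) * σ + (σ - z)))) from
        funext fun j => by rw [show ((j : ℂ) + 1) * σ - z = (j : ℂ) * σ + (σ - z) by ring]]
      exact aux_tprodT hσ _ hc1
    · exact aux_tprodT hσ _ hc2
  rw [aux_ellGamma_eq (z + τ) τ σ hτ hσ hz', aux_ellGamma_eq z τ σ hτ hσ hz, hth,
    ← Complex.exp_add, ← Complex.exp_add]
  congr 1
  have e1 : SS τ σ (σ - z) = TT σ (σ - z) + SS τ σ (τ + σ - z) := by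
    have := aux_SS_split hτ hσ (σ - z)
    rwa [show σ - z + τ = τ + σ - z by ring] at this
  have e2 : SS τ σ z = TT σ z + SS τ σ (z + τ) := aux_SS_split hτ hσ z
  have e0 : τ + σ - (z + τ) = σ - z := by ring
  rw [e0]
  linear_combination e1 + e2

theorem aux_symm (z τ σ : ℂ) : ellGamma z τ σ = ellGamma z σ τ := by
  rw [ellGamma, ellGamma]
  congr 1
  · rw [← (Equiv.prodComm ℕ ℕ).tprod_eq (fun p : ℕ × ℕ => 1 - Complex.exp
      (2 * (Real.pi : ℂ) * Complex.I * (((p.1 : ℂ) + 1) * σ + ((p.2 : ℂ) + 1) * τ - z)))]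
    exact tprod_congr fun p => by
      simp only [Equiv.prodComm_apply, Prod.fst_swap, Prod.snd_swap]
      rw [show ((p.1 : ℂ) + 1) * τ + ((p.2 : ℂ) + 1) * σ - z
        = ((p.2 : ℂ) + 1) * σ + ((p.1 : ℂ) + 1) * τ - z by ring]
  · rw [← (Equiv.prodComm ℕ ℕ).tprod_eq (fun p : ℕ × ℕ => 1 - Complex.exp
      (2 * (Real.pi : ℂ) * Complex.I * ((p.1 : ℂ) * σ + (p.2 : ℂ) * τ + z)))]
    exact tprod_congr fun p => by
      simp only [Equiv.prodComm_apply, Prod.fst_swap, Prod.snd_swap]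
      rw [show (p.1 : ℂ) * τ + (p.2 : ℂ) * σ + z
        = (p.2 : ℂ) * σ + (p.1 : ℂ) * τ + z by ring]


end AuxStatement19

/-- the difference equations
`Γ(z+τ,τ,σ) = θ₀(z,σ)·Γ(z,τ,σ)` and `Γ(z+σ,τ,σ) = θ₀(z,τ)·Γ(z,τ,σ)`. -/
theorem statement19 (z τ σ : ℂ) (hτ : 0 < τ.im) (hσ : 0 < σ.im)
    (hz : ∀ j k l : ℤ, z ≠ (j : ℂ) * τ + (k : ℂ) * σ + (l : ℂ)) :
    ellGamma (z + τ) τ σ = theta0 z σ * ellGamma z τ σ ∧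
    ellGamma (z + σ) τ σ = theta0 z τ * ellGamma z τ σ := by
  constructor
  · exact aux_key z τ σ hτ hσ hz
  · have hz' : ∀ j k l : ℤ, z ≠ (j : ℂ) * σ + (k : ℂ) * τ + (l : ℂ) := fun j k l h =>
      hz k j l (by linear_combination h)
    rw [aux_symm (z + σ) τ σ, aux_symm z τ σ]
    exact aux_key z σ τ hσ hτ hz'

end EGG
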